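/- Let K ≥ 1 and let f = h + conj∘g ∈ S_H^0 be a K-quasiconformal harmonic mapping of 𝔻 onto a bounded Pommerenke interior domain G = f(𝔻). If G is a radial John disk, then ‖D_f‖ ∈ H¹_g(𝔻), i.e. sup_{0<r<1} ∫₀^{2π} (|h'(re^{iθ})| + |g'(re^{iθ})|) dθ < ∞. -/

import Mathlib

open Complex Metric Set MeasureTheory Filter

theorem stmt_9 (K : ℝ) (hK : 1 ≤ K) (h g f : ℂ → ℂ)
    (hh : AnalyticOnNhd ℂ h (Metric.ball (0:ℂ) 1)) (hg : AnalyticOnNhd ℂ g (Metric.ball (0:ℂ) 1))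
    (hf : ∀ z, f z = h z + (starRingEnd ℂ) (g z))
    (finj : Set.InjOn f (Metric.ball (0:ℂ) 1))
    (fsp : ∀ z ∈ Metric.ball (0:ℂ) 1, ‖deriv g z‖ < ‖deriv h z‖)
    (h0 : h 0 = 0) (g0 : g 0 = 0) (h'1 : deriv h 0 = 1) (g'0 : deriv g 0 = 0)
    (hqc : ∀ z ∈ Metric.ball (0:ℂ) 1,
      ‖deriv h z‖ + ‖deriv g z‖
        ≤ K * (‖deriv h z‖ - ‖deriv g z‖))
    (hbdd : Bornology.IsBounded (f '' Metric.ball (0:ℂ) 1))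
    (hPomm : ∃ Mγ : ℝ, ∀ r ∈ Set.Ioo (0:ℝ) 1, ∀ θ₁ θ₂ : ℝ, θ₁ < θ₂ → θ₂ - θ₁ ≤ Real.pi →
      (∫ θ in θ₁..θ₂, ‖Complex.I * (r:ℂ) * Complex.exp ((θ:ℂ) * Complex.I) * deriv h ((r:ℂ) * Complex.exp ((θ:ℂ) * Complex.I))
          + (starRingEnd ℂ) (Complex.I * (r:ℂ) * Complex.exp ((θ:ℂ) * Complex.I) * deriv g ((r:ℂ) * Complex.exp ((θ:ℂ) * Complex.I)))‖)
        ≤ Mγ * sInf {d : ℝ | ∃ Γ : ℝ → ℂ, ContinuousOn Γ (Set.Icc 0 1) ∧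
            Γ 0 = f ((r:ℂ) * Complex.exp ((θ₁:ℂ) * Complex.I)) ∧ Γ 1 = f ((r:ℂ) * Complex.exp ((θ₂:ℂ) * Complex.I)) ∧
            (∀ t ∈ Set.Ioo (0:ℝ) 1, Γ t ∈ f '' Metric.ball (0:ℂ) r) ∧
            d = Metric.diam (Γ '' Set.Icc 0 1)})
    (hJohn : ∃ c : ℝ, 1 ≤ c ∧ (∀ ζ : ℂ, ‖ζ‖ = 1 → ∀ r ρ : ℝ, 0 ≤ r → r ≤ ρ → ρ < 1 →
      (∫ t in r..ρ, ‖ζ * deriv h ((t:ℂ)*ζ) + (starRingEnd ℂ) (ζ * deriv g ((t:ℂ)*ζ))‖)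
        ≤ c * Metric.infDist (f ((r:ℂ)*ζ)) ((f '' Metric.ball (0:ℂ) 1)ᶜ))) :
    ∃ C : ℝ, ∀ r ∈ Set.Ioo (0:ℝ) 1,
      (∫ θ in (0:ℝ)..(2*Real.pi), (‖deriv h ((r:ℂ) * Complex.exp ((θ:ℂ) * Complex.I))‖ + ‖deriv g ((r:ℂ) * Complex.exp ((θ:ℂ) * Complex.I))‖)) ≤ C := by
  obtain ⟨Mγ, hM⟩ := hPomm
  -- continuity facts
  have hh' : ContinuousOn (deriv h) (Metric.ball (0:ℂ) 1) := (hh.deriv).continuousOn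
  have hg' : ContinuousOn (deriv g) (Metric.ball (0:ℂ) 1) := (hg.deriv).continuousOn
  have hFcont : ContinuousOn (fun z => ‖deriv h z‖ + ‖deriv g z‖)
      (Metric.ball (0:ℂ) 1) :=
    (continuous_norm.comp_continuousOn hh').add
      (continuous_norm.comp_continuousOn hg')
  have hfc : ContinuousOn f (Metric.ball (0:ℂ) 1) := by
    have : ContinuousOn (fun z => h z + (starRingEnd ℂ) (g z)) (Metric.ball (0:ℂ) 1) :=
      (hh.continuousOn).add (Complex.continuous_conj.comp_continuousOn hg.continuousOn)
    exact this.congr (fun z _ => hf z)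
  have hsub : Metric.closedBall (0:ℂ) (1/2) ⊆ Metric.ball (0:ℂ) 1 := by
    intro z hz
    simp only [Metric.mem_closedBall, Metric.mem_ball] at hz ⊢
    linarith
  obtain ⟨M, hMbd⟩ := (isCompact_closedBall (0:ℂ) (1/2)).exists_bound_of_continuousOn
    (hFcont.mono hsub)
  set D := Metric.diam (f '' Metric.ball (0:ℂ) 1) with hD
  have hD0 : 0 ≤ D := Metric.diam_nonneg
  have hK0 : (0:ℝ) < K := lt_of_lt_of_le one_pos hK
  refine ⟨max (2*Real.pi*M) (4*K*((_root_.abs Mγ)*D)), ?_⟩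
  rintro r ⟨hr0, hr1⟩
  have habs : ∀ θ : ℝ, ‖(r:ℂ) * Complex.exp ((θ:ℂ)*Complex.I)‖ = r := by
    intro θ
    rw [norm_mul, Complex.norm_exp_ofReal_mul_I, Complex.norm_real, Real.norm_eq_abs, abs_of_pos hr0, mul_one]
  have hmem : ∀ θ : ℝ, (r:ℂ) * Complex.exp ((θ:ℂ)*Complex.I) ∈ Metric.ball (0:ℂ) 1 := by
    intro θ
    simp only [Metric.mem_ball, dist_zero_right, habs θ]
    exact hr1
  -- continuity of the curves in θ
  have hγc : Continuous (fun θ : ℝ => (r:ℂ) * Complex.exp ((θ:ℝ) * Complex.I)) := by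
    fun_prop
  have hG1c : Continuous (fun θ : ℝ =>
      ‖deriv h ((r:ℂ) * Complex.exp ((θ:ℂ) * Complex.I))‖
        + ‖deriv g ((r:ℂ) * Complex.exp ((θ:ℂ) * Complex.I))‖) :=
    hFcont.comp_continuous hγc hmem
  have hG2c : Continuous (fun θ : ℝ =>
      ‖Complex.I * (r:ℂ) * Complex.exp ((θ:ℂ) * Complex.I) * deriv h ((r:ℂ) * Complex.exp ((θ:ℂ) * Complex.I))
        + (starRingEnd ℂ) (Complex.I * (r:ℂ) * Complex.exp ((θ:ℂ) * Complex.I) * deriv g ((r:ℂ) * Complex.exp ((θ:ℂ) * Complex.I)))‖) := by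
    have c1 : Continuous (fun θ : ℝ => deriv h ((r:ℂ) * Complex.exp ((θ:ℂ) * Complex.I))) :=
      hh'.comp_continuous hγc hmem
    have c2 : Continuous (fun θ : ℝ => deriv g ((r:ℂ) * Complex.exp ((θ:ℂ) * Complex.I))) :=
      hg'.comp_continuous hγc hmem
    exact continuous_norm.comp
      (((Continuous.mul (by fun_prop) c1)).add
        (Complex.continuous_conj.comp (Continuous.mul (by fun_prop) c2)))
  -- pointwise inequality
  have key : ∀ θ : ℝ,
      ‖deriv h ((r:ℂ) * Complex.exp ((θ:ℂ) * Complex.I))‖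
        + ‖deriv g ((r:ℂ) * Complex.exp ((θ:ℂ) * Complex.I))‖
      ≤ (K/r) * ‖Complex.I * (r:ℂ) * Complex.exp ((θ:ℂ) * Complex.I) * deriv h ((r:ℂ) * Complex.exp ((θ:ℂ) * Complex.I))
          + (starRingEnd ℂ) (Complex.I * (r:ℂ) * Complex.exp ((θ:ℂ) * Complex.I) * deriv g ((r:ℂ) * Complex.exp ((θ:ℂ) * Complex.I)))‖ := by
    intro θ
    set z := (r:ℂ) * Complex.exp ((θ:ℂ) * Complex.I) with hz
    set A := Complex.I * (r:ℂ) * Complex.exp ((θ:ℂ) * Complex.I) * deriv h z with hA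
    set B := Complex.I * (r:ℂ) * Complex.exp ((θ:ℂ) * Complex.I) * deriv g z with hB
    have habsA : ‖A‖ = r * ‖deriv h z‖ := by
      rw [hA, norm_mul, norm_mul, norm_mul, Complex.norm_I, Complex.norm_exp_ofReal_mul_I,
        Complex.norm_real, Real.norm_eq_abs, abs_of_pos hr0]
      ring
    have habsB : ‖B‖ = r * ‖deriv g z‖ := by
      rw [hB, norm_mul, norm_mul, norm_mul, Complex.norm_I, Complex.norm_exp_ofReal_mul_I,
        Complex.norm_real, Real.norm_eq_abs, abs_of_pos hr0]
      ring
    have hlow : ‖A‖ - ‖B‖ ≤ ‖A + (starRingEnd ℂ) B‖ := by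
      have h1 : ‖A‖ ≤ ‖A + (starRingEnd ℂ) B‖ + ‖(starRingEnd ℂ) B‖ := by
        calc ‖A‖ = ‖(A + (starRingEnd ℂ) B) + (-(starRingEnd ℂ) B)‖ := by ring_nf
          _ ≤ ‖A + (starRingEnd ℂ) B‖ + ‖-(starRingEnd ℂ) B‖ :=
              norm_add_le _ _
          _ = ‖A + (starRingEnd ℂ) B‖ + ‖(starRingEnd ℂ) B‖ := by
              rw [norm_neg]
      have h2 : ‖(starRingEnd ℂ) B‖ = ‖B‖ := Complex.norm_conj B
      linarith
    have hq := hqc z (hmem θ)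
    have hKr : (0:ℝ) < K / r := div_pos hK0 hr0
    have step : K * (‖deriv h z‖ - ‖deriv g z‖)
        ≤ (K/r) * ‖A + (starRingEnd ℂ) B‖ := by
      have : r * (‖deriv h z‖ - ‖deriv g z‖)
          ≤ ‖A + (starRingEnd ℂ) B‖ := by
        rw [mul_sub]
        rw [← habsA, ← habsB]
        exact hlow
      calc K * (‖deriv h z‖ - ‖deriv g z‖)
          = (K/r) * (r * (‖deriv h z‖ - ‖deriv g z‖)) := by
            field_simp
        _ ≤ (K/r) * ‖A + (starRingEnd ℂ) B‖ :=
            mul_le_mul_of_nonneg_left this (le_of_lt hKr)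
    linarith
  -- arc bound from the Pommerenke condition
  have arc : ∀ θ₁ θ₂ : ℝ, θ₁ < θ₂ → θ₂ - θ₁ ≤ Real.pi →
      (∫ θ in θ₁..θ₂, ‖Complex.I * (r:ℂ) * Complex.exp ((θ:ℂ) * Complex.I) * deriv h ((r:ℂ) * Complex.exp ((θ:ℂ) * Complex.I))
          + (starRingEnd ℂ) (Complex.I * (r:ℂ) * Complex.exp ((θ:ℂ) * Complex.I) * deriv g ((r:ℂ) * Complex.exp ((θ:ℂ) * Complex.I)))‖)
        ≤ (_root_.abs Mγ) * D := by
    intro θ₁ θ₂ hlt hle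
    have hP := hM r ⟨hr0, hr1⟩ θ₁ θ₂ hlt hle
    -- the dipping path
    set s : ℝ → ℝ := fun t => r * (1 - Real.sin (Real.pi * t) / 2) with hs
    set w : ℝ → ℂ := fun t => ((s t : ℝ) : ℂ) *
        Complex.exp (((θ₁ + t * (θ₂ - θ₁) : ℝ) : ℂ) * Complex.I) with hw
    have hwmem : ∀ t ∈ Set.Icc (0:ℝ) 1, w t ∈ Metric.ball (0:ℂ) 1 := by
      rintro t ⟨ht0, ht1⟩
      have hsin : 0 ≤ Real.sin (Real.pi * t) := by
        apply Real.sin_nonneg_of_nonneg_of_le_pi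
        · positivity
        · nlinarith [Real.pi_pos]
      have hst : s t ≤ r := by
        simp only [hs]
        nlinarith
      have : ‖w t‖ ≤ r := by
        simp only [hw, norm_mul, Complex.norm_exp_ofReal_mul_I, Complex.norm_real, Real.norm_eq_abs, mul_one]
        calc |s t| = s t := by
              apply _root_.abs_of_nonneg
              simp only [hs]
              nlinarith [Real.sin_le_one (Real.pi * t)]
          _ ≤ r := hst
      simp only [Metric.mem_ball, dist_zero_right]
      linarith
    have hwc : Continuous w := by fun_prop
    set Γ : ℝ → ℂ := fun t => f (w t) with hΓ
    have hΓmem : Metric.diam (Γ '' Set.Icc 0 1) ∈ {d : ℝ | ∃ Γ : ℝ → ℂ, ContinuousOn Γ (Set.Icc 0 1) ∧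
            Γ 0 = f ((r:ℂ) * Complex.exp ((θ₁:ℂ) * Complex.I)) ∧ Γ 1 = f ((r:ℂ) * Complex.exp ((θ₂:ℂ) * Complex.I)) ∧
            (∀ t ∈ Set.Ioo (0:ℝ) 1, Γ t ∈ f '' Metric.ball (0:ℂ) r) ∧
            d = Metric.diam (Γ '' Set.Icc 0 1)} := by
      refine ⟨Γ, ?_, ?_, ?_, ?_, rfl⟩
      · exact hfc.comp hwc.continuousOn hwmem
      · simp only [hΓ, hw, hs]
        norm_num
      · simp only [hΓ, hw, hs]
        norm_num [Real.sin_pi]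
      · rintro t ⟨ht0, ht1⟩
        refine ⟨w t, ?_, rfl⟩
        have hsin : 0 < Real.sin (Real.pi * t) := by
          apply Real.sin_pos_of_pos_of_lt_pi
          · positivity
          · nlinarith [Real.pi_pos]
        have h1 : 0 ≤ s t := by
          simp only [hs]
          nlinarith [Real.sin_le_one (Real.pi * t)]
        have h2 : s t < r := by
          simp only [hs]
          nlinarith
        simp only [Metric.mem_ball, dist_zero_right, hw, norm_mul,
          Complex.norm_exp_ofReal_mul_I, Complex.norm_real, Real.norm_eq_abs, mul_one]
        rwa [_root_.abs_of_nonneg h1]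
    set S := {d : ℝ | ∃ Γ : ℝ → ℂ, ContinuousOn Γ (Set.Icc 0 1) ∧
            Γ 0 = f ((r:ℂ) * Complex.exp ((θ₁:ℂ) * Complex.I)) ∧ Γ 1 = f ((r:ℂ) * Complex.exp ((θ₂:ℂ) * Complex.I)) ∧
            (∀ t ∈ Set.Ioo (0:ℝ) 1, Γ t ∈ f '' Metric.ball (0:ℂ) r) ∧
            d = Metric.diam (Γ '' Set.Icc 0 1)} with hS
    have hSbdd : BddBelow S := by
      refine ⟨0, ?_⟩
      rintro d ⟨Γ', _, _, _, _, rfl⟩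
      exact Metric.diam_nonneg
    have hS0 : 0 ≤ sInf S := by
      apply le_csInf ⟨_, hΓmem⟩
      rintro d ⟨Γ', _, _, _, _, rfl⟩
      exact Metric.diam_nonneg
    have hdD : Metric.diam (Γ '' Set.Icc 0 1) ≤ D := by
      apply Metric.diam_mono _ hbdd
      rintro x ⟨t, ht, rfl⟩
      exact ⟨w t, hwmem t ht, rfl⟩
    calc (∫ θ in θ₁..θ₂, ‖Complex.I * (r:ℂ) * Complex.exp ((θ:ℂ) * Complex.I) * deriv h ((r:ℂ) * Complex.exp ((θ:ℂ) * Complex.I))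
          + (starRingEnd ℂ) (Complex.I * (r:ℂ) * Complex.exp ((θ:ℂ) * Complex.I) * deriv g ((r:ℂ) * Complex.exp ((θ:ℂ) * Complex.I)))‖)
        ≤ Mγ * sInf S := hP
      _ ≤ (_root_.abs Mγ) * sInf S := mul_le_mul_of_nonneg_right (le_abs_self Mγ) hS0
      _ ≤ (_root_.abs Mγ) * Metric.diam (Γ '' Set.Icc 0 1) :=
          mul_le_mul_of_nonneg_left (csInf_le hSbdd hΓmem) (abs_nonneg (α := ℝ) Mγ)
      _ ≤ (_root_.abs Mγ) * D := mul_le_mul_of_nonneg_left hdD (abs_nonneg (α := ℝ) Mγ)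
  -- now the main estimate
  rcases le_or_gt r (1/2) with hr2 | hr2
  · -- small r: bound by the compact sup
    have hbd : ∀ θ ∈ Set.Icc (0:ℝ) (2*Real.pi),
        ‖deriv h ((r:ℂ) * Complex.exp ((θ:ℂ) * Complex.I))‖
          + ‖deriv g ((r:ℂ) * Complex.exp ((θ:ℂ) * Complex.I))‖ ≤ M := by
      intro θ _
      have hz : (r:ℂ) * Complex.exp ((θ:ℂ)*Complex.I) ∈ Metric.closedBall (0:ℂ) (1/2) := by
        simp only [Metric.mem_closedBall, dist_zero_right, habs θ]
        exact hr2
      have := hMbd _ hz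
      calc ‖deriv h ((r:ℂ) * Complex.exp ((θ:ℂ) * Complex.I))‖
          + ‖deriv g ((r:ℂ) * Complex.exp ((θ:ℂ) * Complex.I))‖
          ≤ ‖(‖deriv h ((r:ℂ) * Complex.exp ((θ:ℂ) * Complex.I))‖
            + ‖deriv g ((r:ℂ) * Complex.exp ((θ:ℂ) * Complex.I))‖)‖ := le_abs_self _
        _ ≤ M := this
    have h2pi : (0:ℝ) ≤ 2*Real.pi := by positivity
    calc (∫ θ in (0:ℝ)..(2*Real.pi), (‖deriv h ((r:ℂ) * Complex.exp ((θ:ℂ) * Complex.I))‖ + ‖deriv g ((r:ℂ) * Complex.exp ((θ:ℂ) * Complex.I))‖))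
        ≤ ∫ _ in (0:ℝ)..(2*Real.pi), M := by
          apply intervalIntegral.integral_mono_on h2pi (hG1c.intervalIntegrable _ _)
            intervalIntegrable_const hbd
      _ = 2*Real.pi*M := by simp [mul_comm]
      _ ≤ max (2*Real.pi*M) (4*K*((_root_.abs Mγ)*D)) := le_max_left _ _
  · -- large r: use the Pommerenke arc bound on two half circles
    have hKr2 : K / r ≤ 2 * K := by
      rw [div_le_iff₀ hr0]
      nlinarith
    have hKrpos : 0 ≤ K / r := le_of_lt (div_pos hK0 hr0)
    have harcint : ∀ a b : ℝ, a < b → b - a ≤ Real.pi →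
        (∫ θ in a..b, (‖deriv h ((r:ℂ) * Complex.exp ((θ:ℂ) * Complex.I))‖ + ‖deriv g ((r:ℂ) * Complex.exp ((θ:ℂ) * Complex.I))‖))
          ≤ 2 * K * ((_root_.abs Mγ) * D) := by
      intro a b hab hba
      calc (∫ θ in a..b, (‖deriv h ((r:ℂ) * Complex.exp ((θ:ℂ) * Complex.I))‖ + ‖deriv g ((r:ℂ) * Complex.exp ((θ:ℂ) * Complex.I))‖))
          ≤ ∫ θ in a..b, (K/r) * ‖Complex.I * (r:ℂ) * Complex.exp ((θ:ℂ) * Complex.I) * deriv h ((r:ℂ) * Complex.exp ((θ:ℂ) * Complex.I))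
              + (starRingEnd ℂ) (Complex.I * (r:ℂ) * Complex.exp ((θ:ℂ) * Complex.I) * deriv g ((r:ℂ) * Complex.exp ((θ:ℂ) * Complex.I)))‖ := by
            apply intervalIntegral.integral_mono_on (le_of_lt hab) (hG1c.intervalIntegrable _ _)
              ((continuous_const.mul hG2c).intervalIntegrable _ _)
            intro θ _
            exact key θ
        _ = (K/r) * (∫ θ in a..b, ‖Complex.I * (r:ℂ) * Complex.exp ((θ:ℂ) * Complex.I) * deriv h ((r:ℂ) * Complex.exp ((θ:ℂ) * Complex.I))
              + (starRingEnd ℂ) (Complex.I * (r:ℂ) * Complex.exp ((θ:ℂ) * Complex.I) * deriv g ((r:ℂ) * Complex.exp ((θ:ℂ) * Complex.I)))‖) := by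
            rw [intervalIntegral.integral_const_mul]
        _ ≤ (K/r) * ((_root_.abs Mγ) * D) := by
            apply mul_le_mul_of_nonneg_left (arc a b hab hba) hKrpos
        _ ≤ 2 * K * ((_root_.abs Mγ) * D) := by
            apply mul_le_mul_of_nonneg_right hKr2 (by positivity)
    have hpi : (0:ℝ) < Real.pi := Real.pi_pos
    have hsplit : (∫ θ in (0:ℝ)..(2*Real.pi), (‖deriv h ((r:ℂ) * Complex.exp ((θ:ℂ) * Complex.I))‖ + ‖deriv g ((r:ℂ) * Complex.exp ((θ:ℂ) * Complex.I))‖))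
        = (∫ θ in (0:ℝ)..Real.pi, (‖deriv h ((r:ℂ) * Complex.exp ((θ:ℂ) * Complex.I))‖ + ‖deriv g ((r:ℂ) * Complex.exp ((θ:ℂ) * Complex.I))‖))
          + (∫ θ in Real.pi..(2*Real.pi), (‖deriv h ((r:ℂ) * Complex.exp ((θ:ℂ) * Complex.I))‖ + ‖deriv g ((r:ℂ) * Complex.exp ((θ:ℂ) * Complex.I))‖)) := by
      rw [intervalIntegral.integral_add_adjacent_intervals (hG1c.intervalIntegrable _ _)
        (hG1c.intervalIntegrable _ _)]
    rw [hsplit]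
    have h1 := harcint 0 Real.pi hpi (by linarith)
    have h2 := harcint Real.pi (2*Real.pi) (by linarith) (by linarith)
    calc _ ≤ 2 * K * ((_root_.abs Mγ) * D) + 2 * K * ((_root_.abs Mγ) * D) := add_le_add h1 h2
      _ = 4*K*((_root_.abs Mγ)*D) := by ring
      _ ≤ max (2*Real.pi*M) (4*K*((_root_.abs Mγ)*D)) := le_max_right _ _
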